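/- For every K > 0 there exists a positive constant C₁, depending only on K, with the following property: for every 1-periodic C² function F : ℝ³ → ℝ with ‖F‖_{C²} ≤ K and ∫_{[0,1]³} e^F dV = 1, and every u ∈ C̃⁴(T³) solving the reduced Calabi–Yau equation (u_xx + 1)(u_yy + u_tt + u_t + 1) − u_xy² − u_xt² = e^F, one has |Δu|_{C⁰} ≤ C₁ (1 + |u|_{C¹}), where Δu = u_xx + u_yy + u_tt. -/

import Mathlib

open MeasureTheory

noncomputable section

/-- Points of `ℝ³`, written as `ℝ × ℝ × ℝ`. -/
abbrev R3 := ℝ × ℝ × ℝ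

/-- The coordinate direction `x`. -/
def vx : R3 := (1, 0, 0)
/-- The coordinate direction `y`. -/
def vy : R3 := (0, 1, 0)
/-- The coordinate direction `t`. -/
def vt : R3 := (0, 0, 1)

/-- Partial (directional) derivative in the direction `e`. -/
def pd (e : R3) (u : R3 → ℝ) : R3 → ℝ := fun p => fderiv ℝ u p e

/-- `1`-periodicity in each of the three variables. -/
def Periodic3 (u : R3 → ℝ) : Prop :=
  ∀ p : R3, u (p + vx) = u p ∧ u (p + vy) = u p ∧ u (p + vt) = u p

/-- The unit cube `[0,1]³`. -/
def cube : Set R3 := Set.Icc (0, 0, 0) (1, 1, 1)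

/-- Zero mean over the unit cube. -/
def ZeroMean (u : R3 → ℝ) : Prop := ∫ p in cube, u p = 0

/-- The reduced Calabi–Yau equation
`(u_xx + 1)(u_yy + u_tt + u_t + 1) − u_xy² − u_xt² = e^F` on `ℝ³`. -/
def CYeq (F u : R3 → ℝ) : Prop :=
  ∀ p : R3,
    (pd vx (pd vx u) p + 1)
        * (pd vy (pd vy u) p + pd vt (pd vt u) p + pd vt u p + 1)
      - (pd vy (pd vx u) p) ^ 2 - (pd vt (pd vx u) p) ^ 2 = Real.exp (F p)

/-- The Euclidean norm on `ℝ³ = ℝ × ℝ × ℝ`. -/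
def enorm3 (h : R3) : ℝ := Real.sqrt (h.1 ^ 2 + h.2.1 ^ 2 + h.2.2 ^ 2)

/-- `‖F‖_{C²} ≤ K`: all partial derivatives of `F` of order `≤ 2` are bounded by `K`. -/
def C2Bound (F : R3 → ℝ) (K : ℝ) : Prop :=
  ∀ p : R3, |F p| ≤ K ∧
    (∀ e ∈ ({vx, vy, vt} : Set R3), |pd e F p| ≤ K) ∧
    (∀ e ∈ ({vx, vy, vt} : Set R3), ∀ e' ∈ ({vx, vy, vt} : Set R3),
      |pd e (pd e' F) p| ≤ K)

namespace CYaux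

lemma pd_contDiff {n m : WithTop ℕ∞} {u : R3 → ℝ} (hu : ContDiff ℝ n u) (h : m + 1 ≤ n) (e : R3) :
    ContDiff ℝ m (pd e u) :=
  (hu.fderiv_right h).clm_apply contDiff_const

lemma pd_congr {f g : R3 → ℝ} (e : R3) (h : ∀ q, f q = g q) (p : R3) : pd e f p = pd e g p := by
  have : f = g := funext h
  rw [pd, this, ← pd]

lemma pd_add {f g : R3 → ℝ} {p : R3} (hf : DifferentiableAt ℝ f p) (hg : DifferentiableAt ℝ g p)
    (e : R3) : pd e (fun q => f q + g q) p = pd e f p + pd e g p := by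
  simp only [pd, fderiv_fun_add hf hg, ContinuousLinearMap.add_apply]

lemma pd_sub {f g : R3 → ℝ} {p : R3} (hf : DifferentiableAt ℝ f p) (hg : DifferentiableAt ℝ g p)
    (e : R3) : pd e (fun q => f q - g q) p = pd e f p - pd e g p := by
  simp only [pd, fderiv_fun_sub hf hg, ContinuousLinearMap.sub_apply]

lemma pd_mul {f g : R3 → ℝ} {p : R3} (hf : DifferentiableAt ℝ f p) (hg : DifferentiableAt ℝ g p)
    (e : R3) : pd e (fun q => f q * g q) p = pd e f p * g p + f p * pd e g p := by
  simp only [pd, fderiv_fun_mul hf hg, ContinuousLinearMap.add_apply, ContinuousLinearMap.smul_apply,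
    smul_eq_mul]
  ring

lemma pd_add_const {f : R3 → ℝ} (c : ℝ) (p e : R3) :
    pd e (fun q => f q + c) p = pd e f p := by
  simp only [pd, fderiv_add_const]

lemma pd_const_mul {f : R3 → ℝ} {p : R3} (hf : DifferentiableAt ℝ f p) (c : ℝ) (e : R3) :
    pd e (fun q => c * f q) p = c * pd e f p := by
  simp only [pd, fderiv_const_mul hf, ContinuousLinearMap.smul_apply, smul_eq_mul]

lemma pd_neg (f : R3 → ℝ) (p e : R3) : pd e (fun q => -(f q)) p = -(pd e f p) := by
  simp only [pd, fderiv_fun_neg, ContinuousLinearMap.neg_apply]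

lemma pd_exp {F : R3 → ℝ} {p : R3} (hF : DifferentiableAt ℝ F p) (e : R3) :
    pd e (fun q => Real.exp (F q)) p = Real.exp (F p) * pd e F p := by
  simp only [pd, fderiv_exp hF, ContinuousLinearMap.smul_apply, smul_eq_mul]

lemma pd_sq {f : R3 → ℝ} {p : R3} (hf : DifferentiableAt ℝ f p) (e : R3) :
    pd e (fun q => f q ^ 2) p = 2 * f p * pd e f p := by
  have : (fun q => f q ^ 2) = fun q => f q * f q := funext fun q => sq (f q)
  rw [this, pd_mul hf hf]; ring

lemma pd_dir (f : R3 → ℝ) (p w : R3) :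
    pd w f p = w.1 * pd vx f p + w.2.1 * pd vy f p + w.2.2 * pd vt f p := by
  have hw : w = w.1 • vx + (w.2.1 • vy + w.2.2 • vt) := by
    simp [vx, vy, vt, Prod.ext_iff]
  simp only [pd]
  conv_lhs => rw [hw]
  rw [map_add, map_add, _root_.map_smul, _root_.map_smul, _root_.map_smul]
  simp only [smul_eq_mul]
  ring

lemma pd_dir' (f : R3 → ℝ) (p : R3) (w1 w2 w3 : ℝ) :
    pd (w1, w2, w3) f p = w1 * pd vx f p + w2 * pd vy f p + w3 * pd vt f p :=
  pd_dir f p (w1, w2, w3)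

/-- Schwarz symmetry of second partial derivatives. -/
lemma pd_comm {f : R3 → ℝ} (hf : ContDiff ℝ 2 f) (e e' : R3) (p : R3) :
    pd e (pd e' f) p = pd e' (pd e f) p := by
  have hdf : DifferentiableAt ℝ (fderiv ℝ f) p :=
    ((hf.fderiv_right (m := 1) (by norm_num)).differentiable (by norm_num) p)
  have key : ∀ v w : R3, pd v (pd w f) p = (fderiv ℝ (fderiv ℝ f) p v) w := by
    intro v w
    have hcomp : pd w f = fun q => (fderiv ℝ f q) w := rfl
    rw [pd, hcomp, fderiv_clm_apply hdf (differentiableAt_const w)]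
    simp
  rw [key, key]
  exact (hf.contDiffAt.isSymmSndFDerivAt (by simp)) e e'

/-- fderiv is translation invariant for a function invariant under the translation. -/
lemma fderiv_shift {u : R3 → ℝ} (hu : Differentiable ℝ u) {v : R3}
    (hper : ∀ q, u (q + v) = u q) (p : R3) : fderiv ℝ u (p + v) = fderiv ℝ u p := by
  have htr : HasFDerivAt (fun q : R3 => q + v) (ContinuousLinearMap.id ℝ R3) p :=
    (hasFDerivAt_id p).add_const v
  have h1 : HasFDerivAt (fun q => u (q + v)) ((fderiv ℝ u (p + v)).comp
      (ContinuousLinearMap.id ℝ R3)) p := (hu (p + v)).hasFDerivAt.comp p htr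
  have h2 : (fun q => u (q + v)) = u := funext hper
  rw [h2, ContinuousLinearMap.comp_id] at h1
  exact (h1.fderiv).symm

lemma pd_periodic {u : R3 → ℝ} (hu : Differentiable ℝ u) (hper : Periodic3 u) (e : R3) :
    Periodic3 (pd e u) := by
  intro p
  refine ⟨?_, ?_, ?_⟩ <;> simp only [pd]
  · rw [fderiv_shift hu (fun q => (hper q).1) p]
  · rw [fderiv_shift hu (fun q => (hper q).2.1) p]
  · rw [fderiv_shift hu (fun q => (hper q).2.2) p]

lemma shift_int {g : R3 → ℝ} {v : R3} (hg : ∀ p : R3, g (p + v) = g p) (n : ℤ) (p : R3) :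
    g (p + n • v) = g p := by
  induction n using Int.induction_on with
  | zero => simp
  | succ k ih =>
      have : p + ((k : ℤ) + 1) • v = (p + (k : ℤ) • v) + v := by
        rw [add_smul, one_smul]; abel
      rw [this, hg, ih]
  | pred k ih =>
      have h1 : (p + (-(k : ℤ) - 1) • v) + v = p + (-(k : ℤ)) • v := by
        rw [sub_smul, one_smul]; abel
      have h2 := hg (p + (-(k : ℤ) - 1) • v)
      rw [h1] at h2; rw [← h2]; exact ih

/-- Every point has a representative in the unit cube at which every 1-periodic
function takes the same value. -/
lemma exists_cube_rep (p : R3) : ∃ q ∈ cube, ∀ g : R3 → ℝ, Periodic3 g → g q = g p := by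
  refine ⟨p + (-⌊p.1⌋ : ℤ) • vx + (-⌊p.2.1⌋ : ℤ) • vy + (-⌊p.2.2⌋ : ℤ) • vt, ?_, ?_⟩
  · have hq : p + (-⌊p.1⌋ : ℤ) • vx + (-⌊p.2.1⌋ : ℤ) • vy + (-⌊p.2.2⌋ : ℤ) • vt
        = (Int.fract p.1, Int.fract p.2.1, Int.fract p.2.2) := by
      have e1 : ((-⌊p.1⌋ : ℤ) • vx : R3) = ((-⌊p.1⌋ : ℝ), 0, 0) := by
        simp [vx, Prod.smul_mk]
      have e2 : ((-⌊p.2.1⌋ : ℤ) • vy : R3) = (0, (-⌊p.2.1⌋ : ℝ), 0) := by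
        simp [vy, Prod.smul_mk]
      have e3 : ((-⌊p.2.2⌋ : ℤ) • vt : R3) = (0, 0, (-⌊p.2.2⌋ : ℝ)) := by
        simp [vt, Prod.smul_mk]
      rw [e1, e2, e3]
      simp only [Prod.ext_iff, Prod.fst_add, Prod.snd_add, Int.fract]
      refine ⟨by ring, by ring, by ring⟩
    rw [hq]
    constructor
    · exact ⟨Int.fract_nonneg _, ⟨Int.fract_nonneg _, Int.fract_nonneg _⟩⟩
    · exact ⟨(Int.fract_lt_one _).le, ⟨(Int.fract_lt_one _).le, (Int.fract_lt_one _).le⟩⟩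
  · intro g hg
    rw [shift_int (fun q => (hg q).2.2) _ _, shift_int (fun q => (hg q).2.1) _ _,
      shift_int (fun q => (hg q).1) _ _]

/-- A continuous periodic function attains a global maximum. -/
lemma exists_global_max {H : R3 → ℝ} (hc : Continuous H) (hper : Periodic3 H) :
    ∃ p₀ : R3, ∀ p : R3, H p ≤ H p₀ := by
  have hcomp : IsCompact cube := isCompact_Icc
  have hne : cube.Nonempty := ⟨(0,0,0), by constructor <;> simp [Prod.le_def]⟩
  obtain ⟨p₀, _, hmax⟩ := hcomp.exists_isMaxOn hne hc.continuousOn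
  refine ⟨p₀, fun p => ?_⟩
  obtain ⟨q, hq, hrep⟩ := exists_cube_rep p
  rw [← hrep H hper]
  exact hmax hq

lemma line_hasDerivAt (p₀ w : R3) (s : ℝ) :
    HasDerivAt (fun s : ℝ => p₀ + s • w) w s := by
  simpa using ((hasDerivAt_id s).smul_const w).const_add p₀

lemma comp_line_hasDerivAt {f : R3 → ℝ} (hf : Differentiable ℝ f) (p₀ w : R3) (s : ℝ) :
    HasDerivAt (fun s : ℝ => f (p₀ + s • w)) (pd w f (p₀ + s • w)) s :=
  (hf (p₀ + s • w)).hasFDerivAt.comp_hasDerivAt s (line_hasDerivAt p₀ w s)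

/-- Second derivative test at a global maximum, directional version. -/
lemma max_second_deriv {H : R3 → ℝ} (hH : ContDiff ℝ 2 H) {p₀ : R3}
    (hmax : ∀ p, H p ≤ H p₀) (w : R3) :
    pd w H p₀ = 0 ∧ pd w (pd w H) p₀ ≤ 0 := by
  have hHd : Differentiable ℝ H := hH.differentiable (by norm_num)
  have hH1 : ContDiff ℝ 1 (pd w H) :=
    (hH.fderiv_right (m := 1) (by norm_num)).clm_apply contDiff_const
  have hH1d : Differentiable ℝ (pd w H) := hH1.differentiable (by norm_num)
  set g : ℝ → ℝ := fun s => H (p₀ + s • w) with hg_def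
  set g1 : ℝ → ℝ := fun s => pd w H (p₀ + s • w) with hg1_def
  have hg : ∀ s, HasDerivAt g (g1 s) s := fun s => comp_line_hasDerivAt hHd p₀ w s
  have hg1 : ∀ s, HasDerivAt g1 (pd w (pd w H) (p₀ + s • w)) s := fun s =>
    comp_line_hasDerivAt hH1d p₀ w s
  have hzero : p₀ + (0:ℝ) • w = p₀ := by simp
  have hmax' : IsLocalMax g 0 := by
    apply Filter.Eventually.of_forall
    intro s
    have := hmax (p₀ + s • w)
    simpa [hg_def, hzero] using this
  have h1 : g1 0 = 0 := hmax'.hasDerivAt_eq_zero (hg 0)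
  have h1' : pd w H p₀ = 0 := by simpa [hg1_def, hzero] using h1
  refine ⟨h1', ?_⟩
  by_contra hcon
  push_neg at hcon
  have hq : 0 < pd w (pd w H) p₀ := hcon
  have hg1_0 : HasDerivAt g1 (pd w (pd w H) p₀) 0 := by
    have := hg1 0; rwa [hzero] at this
  have hslope : Filter.Tendsto (slope g1 0) (nhdsWithin 0 {(0:ℝ)}ᶜ) (nhds (pd w (pd w H) p₀)) :=
    hasDerivAt_iff_tendsto_slope.mp hg1_0
  have hev : ∀ᶠ s in nhdsWithin 0 {(0:ℝ)}ᶜ, slope g1 0 s ∈ Set.Ioi (0:ℝ) :=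
    hslope.eventually (isOpen_Ioi.mem_nhds hq)
  have hev' : ∀ᶠ s in nhdsWithin (0:ℝ) (Set.Ioi 0), slope g1 0 s ∈ Set.Ioi (0:ℝ) :=
    hev.filter_mono (nhdsWithin_mono 0 (fun s hs => by simpa using ne_of_gt hs))
  obtain ⟨c, hc, hsub⟩ := mem_nhdsGT_iff_exists_Ioo_subset.mp hev'
  have hc0 : (0:ℝ) < c := hc
  have hpos : ∀ s ∈ Set.Ioo (0:ℝ) (c/2 + c/2), 0 < g1 s := by
    intro s hs
    have hs' : s ∈ Set.Ioo (0:ℝ) c := by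
      constructor
      · exact hs.1
      · have := hs.2; linarith
    have := hsub hs'
    have h2 : slope g1 0 s = s⁻¹ * g1 s := by
      simp [slope, h1]
    have h3 : 0 < s⁻¹ * g1 s := by rw [← h2]; exact Set.mem_Ioi.mp this
    have hspos : 0 < s := hs'.1
    have h4 := mul_pos hspos h3
    rwa [← mul_assoc, mul_inv_cancel₀ (ne_of_gt hspos), one_mul] at h4
  have hmono : StrictMonoOn g (Set.Icc 0 (c/2)) := by
    apply strictMonoOn_of_deriv_pos (convex_Icc 0 (c/2))
    · have hdg : Differentiable ℝ g := fun s => (hg s).differentiableAt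
      exact hdg.continuous.continuousOn
    · intro s hs
      rw [interior_Icc] at hs
      rw [(hg s).deriv]
      exact hpos s ⟨hs.1, by have := hs.2; linarith⟩
  have hlt : g 0 < g (c/2) := hmono (Set.left_mem_Icc.mpr (by linarith))
    (Set.right_mem_Icc.mpr (by linarith)) (by linarith)
  have : g (c/2) ≤ g 0 := by
    have := hmax (p₀ + (c/2) • w)
    simpa [hg_def, hzero] using this
  linarith

lemma osc_bound {u : R3 → ℝ} (hu : Differentiable ℝ u) {M : ℝ}
    (hM : ∀ e ∈ ({vx, vy, vt} : Set R3), ∀ p : R3, |pd e u p| ≤ M)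
    {p q : R3} (hp : p ∈ cube) (hq : q ∈ cube) : |u p - u q| ≤ 3 * M := by
  have hMx := hM vx (by simp)
  have hMy := hM vy (by simp)
  have hMt := hM vt (by simp)
  have hM0 : 0 ≤ M := le_trans (abs_nonneg _) (hMx p)
  have hbound : ∀ x : R3, ‖fderiv ℝ u x‖ ≤ 3 * M := by
    intro x
    apply ContinuousLinearMap.opNorm_le_bound _ (by linarith)
    intro w
    have h1 : fderiv ℝ u x w = pd w u x := rfl
    rw [h1, pd_dir, Real.norm_eq_abs]
    have e1 : |w.1| ≤ ‖w‖ := by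
      have := norm_fst_le w; rwa [Real.norm_eq_abs] at this
    have e2 : |w.2.1| ≤ ‖w‖ := by
      have h := norm_fst_le w.2; rw [Real.norm_eq_abs] at h
      exact le_trans h (norm_snd_le w)
    have e3 : |w.2.2| ≤ ‖w‖ := by
      have h := norm_snd_le w.2; rw [Real.norm_eq_abs] at h
      exact le_trans h (norm_snd_le w)
    have hx := hMx x; have hy := hMy x; have ht := hMt x
    calc |w.1 * pd vx u x + w.2.1 * pd vy u x + w.2.2 * pd vt u x|
        ≤ |w.1 * pd vx u x| + |w.2.1 * pd vy u x| + |w.2.2 * pd vt u x| := by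
          exact (abs_add_le _ _).trans (by gcongr; exact abs_add_le _ _)
      _ ≤ ‖w‖ * M + ‖w‖ * M + ‖w‖ * M := by
          rw [abs_mul, abs_mul, abs_mul]
          gcongr <;> first
            | exact abs_nonneg _
            | assumption
      _ ≤ 3 * M * ‖w‖ := by ring_nf; rfl
  have hmvt := Convex.norm_image_sub_le_of_norm_fderiv_le
    (fun x _ => (hu x) ) (fun x _ => hbound x) convex_univ (Set.mem_univ q) (Set.mem_univ p)
  rw [Real.norm_eq_abs] at hmvt
  have hdist : ‖p - q‖ ≤ 1 := by
    obtain ⟨hp1, hp2⟩ := hp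
    obtain ⟨hq1, hq2⟩ := hq
    rw [Prod.le_def] at hp1 hp2 hq1 hq2
    obtain ⟨hp1a, hp1b⟩ := hp1; obtain ⟨hp2a, hp2b⟩ := hp2
    obtain ⟨hq1a, hq1b⟩ := hq1; obtain ⟨hq2a, hq2b⟩ := hq2
    rw [Prod.le_def] at hp1b hp2b hq1b hq2b
    have n1 : ‖(p - q).1‖ ≤ 1 := by
      rw [Real.norm_eq_abs, Prod.fst_sub, abs_le]
      constructor <;> simp_all <;> linarith
    have n2 : ‖(p - q).2.1‖ ≤ 1 := by
      rw [Real.norm_eq_abs, Prod.snd_sub, Prod.fst_sub, abs_le]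
      constructor <;> simp_all <;> linarith
    have n3 : ‖(p - q).2.2‖ ≤ 1 := by
      rw [Real.norm_eq_abs, Prod.snd_sub, Prod.snd_sub, abs_le]
      constructor <;> simp_all <;> linarith
    rw [Prod.norm_def, Prod.norm_def]
    exact max_le n1 (max_le n2 n3)
  calc |u p - u q| ≤ 3 * M * ‖p - q‖ := hmvt
    _ ≤ 3 * M * 1 := mul_le_mul_of_nonneg_left hdist (by linarith)
    _ = 3 * M := by ring

lemma pos_of_never_zero {f : R3 → ℝ} (hf : Continuous f) (h0 : ∀ p, f p ≠ 0)
    {ps : R3} (hps : 0 < f ps) : ∀ p, 0 < f p := by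
  intro p
  rcases lt_or_gt_of_ne (h0 p) with hneg | hpos
  · exfalso
    set φ : ℝ → ℝ := fun s => f (p + s • (ps - p)) with hφ
    have hφc : Continuous φ := hf.comp (by continuity)
    have hiv := intermediate_value_Icc (by norm_num : (0:ℝ) ≤ 1) hφc.continuousOn
    have hφ0 : φ 0 = f p := by simp [hφ]
    have hφ1 : φ 1 = f ps := by simp [hφ]
    have h0mem : (0:ℝ) ∈ Set.Icc (φ 0) (φ 1) := by
      rw [hφ0, hφ1]; exact ⟨le_of_lt hneg, le_of_lt hps⟩
    obtain ⟨s, _, hs⟩ := hiv h0mem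
    exact h0 _ hs
  · exact hpos

variable {u F : R3 → ℝ}

lemma ud3 (hu : ContDiff ℝ 4 u) (e : R3) : ContDiff ℝ 3 (pd e u) :=
  pd_contDiff hu (by norm_num) e
lemma ud2 (hu : ContDiff ℝ 4 u) (e e' : R3) : ContDiff ℝ 2 (pd e' (pd e u)) :=
  pd_contDiff (ud3 hu e) (by norm_num) e'
lemma ud1 (hu : ContDiff ℝ 4 u) (e e' e'' : R3) : ContDiff ℝ 1 (pd e'' (pd e' (pd e u))) :=
  pd_contDiff (ud2 hu e e') (by norm_num) e''
lemma Fd1 (hF : ContDiff ℝ 2 F) (e : R3) : ContDiff ℝ 1 (pd e F) :=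
  pd_contDiff hF (by norm_num) e

lemma sw_u (hu : ContDiff ℝ 4 u) (i j : R3) (p : R3) :
    pd i (pd j u) p = pd j (pd i u) p := pd_comm (hu.of_le (by norm_num)) i j p
lemma sw12_3 (hu : ContDiff ℝ 4 u) (i j k : R3) (p : R3) :
    pd i (pd j (pd k u)) p = pd j (pd i (pd k u)) p :=
  pd_comm ((ud3 hu k).of_le (by norm_num)) i j p
lemma sw23_3 (hu : ContDiff ℝ 4 u) (i j k : R3) (p : R3) :
    pd i (pd j (pd k u)) p = pd i (pd k (pd j u)) p :=
  pd_congr i (fun q => sw_u hu j k q) p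
lemma sw12_4 (hu : ContDiff ℝ 4 u) (i j k l : R3) (p : R3) :
    pd i (pd j (pd k (pd l u))) p = pd j (pd i (pd k (pd l u))) p :=
  pd_comm (ud2 hu l k) i j p
lemma sw23_4 (hu : ContDiff ℝ 4 u) (i j k l : R3) (p : R3) :
    pd i (pd j (pd k (pd l u))) p = pd i (pd k (pd j (pd l u))) p :=
  pd_congr i (fun q => sw12_3 hu j k l q) p
lemma sw34_4 (hu : ContDiff ℝ 4 u) (i j k l : R3) (p : R3) :
    pd i (pd j (pd k (pd l u))) p = pd i (pd j (pd l (pd k u))) p :=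
  pd_congr i (fun q => sw23_3 hu j k l q) p

lemma commC1 (hu : ContDiff ℝ 4 u) (p : R3) :
    pd vy (pd vy (pd vx (pd vx u))) p = pd vx (pd vx (pd vy (pd vy u))) p :=
  (sw23_4 hu vy vy vx vx p).trans ((sw12_4 hu vy vx vy vx p).trans
    ((sw34_4 hu vx vy vy vx p).trans (sw23_4 hu vx vy vx vy p)))
lemma commC2 (hu : ContDiff ℝ 4 u) (p : R3) :
    pd vt (pd vt (pd vx (pd vx u))) p = pd vx (pd vx (pd vt (pd vt u))) p :=
  (sw23_4 hu vt vt vx vx p).trans ((sw12_4 hu vt vx vt vx p).trans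
    ((sw34_4 hu vx vt vt vx p).trans (sw23_4 hu vx vt vx vt p)))
lemma commC3 (hu : ContDiff ℝ 4 u) (p : R3) :
    pd vt (pd vx (pd vx u)) p = pd vx (pd vx (pd vt u)) p :=
  (sw12_3 hu vt vx vx p).trans (sw23_3 hu vx vt vx p)
lemma commC4 (hu : ContDiff ℝ 4 u) (p : R3) :
    pd vx (pd vx (pd vy (pd vx u))) p = pd vx (pd vy (pd vx (pd vx u))) p :=
  sw23_4 hu vx vx vy vx p
lemma commC5 (hu : ContDiff ℝ 4 u) (p : R3) :
    pd vy (pd vy (pd vy (pd vx u))) p = pd vx (pd vy (pd vy (pd vy u))) p :=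
  (sw34_4 hu vy vy vy vx p).trans ((sw23_4 hu vy vy vx vy p).trans
    (sw12_4 hu vy vx vy vy p))
lemma commC6 (hu : ContDiff ℝ 4 u) (p : R3) :
    pd vt (pd vt (pd vy (pd vx u))) p = pd vx (pd vy (pd vt (pd vt u))) p :=
  (sw34_4 hu vt vt vy vx p).trans ((sw23_4 hu vt vt vx vy p).trans
    ((sw12_4 hu vt vx vt vy p).trans ((sw34_4 hu vx vt vt vy p).trans
      (sw23_4 hu vx vt vy vt p))))
lemma commC7 (hu : ContDiff ℝ 4 u) (p : R3) :
    pd vt (pd vy (pd vx u)) p = pd vx (pd vy (pd vt u)) p :=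
  (sw23_3 hu vt vy vx p).trans ((sw12_3 hu vt vx vy p).trans (sw23_3 hu vx vt vy p))
lemma commC8 (hu : ContDiff ℝ 4 u) (p : R3) :
    pd vx (pd vx (pd vt (pd vx u))) p = pd vx (pd vt (pd vx (pd vx u))) p :=
  sw23_4 hu vx vx vt vx p
lemma commC9 (hu : ContDiff ℝ 4 u) (p : R3) :
    pd vy (pd vy (pd vt (pd vx u))) p = pd vx (pd vt (pd vy (pd vy u))) p :=
  (sw34_4 hu vy vy vt vx p).trans ((sw23_4 hu vy vy vx vt p).trans
    ((sw12_4 hu vy vx vy vt p).trans ((sw34_4 hu vx vy vy vt p).trans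
      (sw23_4 hu vx vy vt vy p))))
lemma commC10 (hu : ContDiff ℝ 4 u) (p : R3) :
    pd vt (pd vt (pd vt (pd vx u))) p = pd vx (pd vt (pd vt (pd vt u))) p :=
  (sw34_4 hu vt vt vt vx p).trans ((sw23_4 hu vt vt vx vt p).trans
    (sw12_4 hu vt vx vt vt p))
lemma commC11 (hu : ContDiff ℝ 4 u) (p : R3) :
    pd vt (pd vt (pd vx u)) p = pd vx (pd vt (pd vt u)) p :=
  (sw23_3 hu vt vt vx p).trans (sw12_3 hu vt vx vt p)

/-- First derivative of the Calabi–Yau equation in direction `e`. -/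
lemma CY_d1 (hF : ContDiff ℝ 2 F) (hu : ContDiff ℝ 4 u) (hcy : CYeq F u) (e p : R3) :
    pd e (pd vx (pd vx u)) p * (pd vy (pd vy u) p + pd vt (pd vt u) p + pd vt u p + 1)
      + (pd vx (pd vx u) p + 1)
        * (pd e (pd vy (pd vy u)) p + pd e (pd vt (pd vt u)) p + pd e (pd vt u) p)
      - 2 * pd vy (pd vx u) p * pd e (pd vy (pd vx u)) p
      - 2 * pd vt (pd vx u) p * pd e (pd vt (pd vx u)) p
      = Real.exp (F p) * pd e F p := by
  have Dxx : DifferentiableAt ℝ (pd vx (pd vx u)) p :=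
    ((ud2 hu vx vx).differentiable (by norm_num)) p
  have Dyy : DifferentiableAt ℝ (pd vy (pd vy u)) p :=
    ((ud2 hu vy vy).differentiable (by norm_num)) p
  have Dtt : DifferentiableAt ℝ (pd vt (pd vt u)) p :=
    ((ud2 hu vt vt).differentiable (by norm_num)) p
  have Dyx : DifferentiableAt ℝ (pd vy (pd vx u)) p :=
    ((ud2 hu vx vy).differentiable (by norm_num)) p
  have Dtx : DifferentiableAt ℝ (pd vt (pd vx u)) p :=
    ((ud2 hu vx vt).differentiable (by norm_num)) p
  have Dt : DifferentiableAt ℝ (pd vt u) p := ((ud3 hu vt).differentiable (by norm_num)) p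
  have DF : DifferentiableAt ℝ F p := (hF.differentiable (by norm_num)) p
  have DA : DifferentiableAt ℝ (fun q => pd vx (pd vx u) q + 1) p := Dxx.add_const 1
  have DBsum : DifferentiableAt ℝ (fun q => pd vy (pd vy u) q + pd vt (pd vt u) q + pd vt u q) p :=
    (Dyy.add Dtt).add Dt
  have DB : DifferentiableAt ℝ
      (fun q => pd vy (pd vy u) q + pd vt (pd vt u) q + pd vt u q + 1) p := DBsum.add_const 1
  have key := pd_congr (f := fun q =>
      (pd vx (pd vx u) q + 1) * (pd vy (pd vy u) q + pd vt (pd vt u) q + pd vt u q + 1)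
        - (pd vy (pd vx u) q) ^ 2 - (pd vt (pd vx u) q) ^ 2)
    (g := fun q => Real.exp (F q)) e (fun q => hcy q) p
  rw [pd_exp DF] at key
  rw [pd_sub ((DA.fun_mul DB).fun_sub (Dyx.fun_pow 2)) (Dtx.fun_pow 2)] at key
  rw [pd_sub (DA.fun_mul DB) (Dyx.fun_pow 2)] at key
  rw [pd_mul DA DB] at key
  rw [pd_sq Dyx, pd_sq Dtx] at key
  rw [pd_add_const (f := fun q => pd vx (pd vx u) q) 1] at key
  rw [pd_add_const (f := fun q => pd vy (pd vy u) q + pd vt (pd vt u) q + pd vt u q) 1] at key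
  rw [pd_add (Dyy.fun_add Dtt) Dt, pd_add Dyy Dtt] at key
  have hxx : pd e (fun q => pd vx (pd vx u) q) p = pd e (pd vx (pd vx u)) p := rfl
  rw [hxx] at key
  linarith [key]

/-- Second derivative of the Calabi–Yau equation in direction `e` (twice). -/
lemma CY_d2 (hF : ContDiff ℝ 2 F) (hu : ContDiff ℝ 4 u) (hcy : CYeq F u) (e p : R3) :
    pd e (pd e (pd vx (pd vx u))) p
        * (pd vy (pd vy u) p + pd vt (pd vt u) p + pd vt u p + 1)
      + 2 * pd e (pd vx (pd vx u)) p
        * (pd e (pd vy (pd vy u)) p + pd e (pd vt (pd vt u)) p + pd e (pd vt u) p)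
      + (pd vx (pd vx u) p + 1)
        * (pd e (pd e (pd vy (pd vy u))) p + pd e (pd e (pd vt (pd vt u))) p
            + pd e (pd e (pd vt u)) p)
      - 2 * (pd e (pd vy (pd vx u)) p) ^ 2
      - 2 * pd vy (pd vx u) p * pd e (pd e (pd vy (pd vx u))) p
      - 2 * (pd e (pd vt (pd vx u)) p) ^ 2
      - 2 * pd vt (pd vx u) p * pd e (pd e (pd vt (pd vx u))) p
      = Real.exp (F p) * pd e F p * pd e F p + Real.exp (F p) * pd e (pd e F) p := by
  have Dxx : DifferentiableAt ℝ (pd vx (pd vx u)) p :=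
    ((ud2 hu vx vx).differentiable (by norm_num)) p
  have Dyy : DifferentiableAt ℝ (pd vy (pd vy u)) p :=
    ((ud2 hu vy vy).differentiable (by norm_num)) p
  have Dtt : DifferentiableAt ℝ (pd vt (pd vt u)) p :=
    ((ud2 hu vt vt).differentiable (by norm_num)) p
  have Dyx : DifferentiableAt ℝ (pd vy (pd vx u)) p :=
    ((ud2 hu vx vy).differentiable (by norm_num)) p
  have Dtx : DifferentiableAt ℝ (pd vt (pd vx u)) p :=
    ((ud2 hu vx vt).differentiable (by norm_num)) p
  have Dt : DifferentiableAt ℝ (pd vt u) p := ((ud3 hu vt).differentiable (by norm_num)) p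
  have DF : DifferentiableAt ℝ F p := (hF.differentiable (by norm_num)) p
  have DFe : DifferentiableAt ℝ (pd e F) p := ((Fd1 hF e).differentiable (by norm_num)) p
  have Dexx : DifferentiableAt ℝ (pd e (pd vx (pd vx u))) p :=
    ((ud1 hu vx vx e).differentiable (by norm_num)) p
  have Deyy : DifferentiableAt ℝ (pd e (pd vy (pd vy u))) p :=
    ((ud1 hu vy vy e).differentiable (by norm_num)) p
  have Dett : DifferentiableAt ℝ (pd e (pd vt (pd vt u))) p :=
    ((ud1 hu vt vt e).differentiable (by norm_num)) p
  have Deyx : DifferentiableAt ℝ (pd e (pd vy (pd vx u))) p :=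
    ((ud1 hu vx vy e).differentiable (by norm_num)) p
  have Detx : DifferentiableAt ℝ (pd e (pd vt (pd vx u))) p :=
    ((ud1 hu vx vt e).differentiable (by norm_num)) p
  have Deut : DifferentiableAt ℝ (pd e (pd vt u)) p :=
    (((ud2 hu vt e)).differentiable (by norm_num)) p
  have DA : DifferentiableAt ℝ (fun q => pd vx (pd vx u) q + 1) p := Dxx.add_const 1
  have DB : DifferentiableAt ℝ
      (fun q => pd vy (pd vy u) q + pd vt (pd vt u) q + pd vt u q + 1) p :=
    ((Dyy.add Dtt).add Dt).add_const 1
  have DC : DifferentiableAt ℝ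
      (fun q => pd e (pd vy (pd vy u)) q + pd e (pd vt (pd vt u)) q + pd e (pd vt u) q) p :=
    (Deyy.add Dett).add Deut
  have DT1 : DifferentiableAt ℝ (fun q => pd e (pd vx (pd vx u)) q
      * (pd vy (pd vy u) q + pd vt (pd vt u) q + pd vt u q + 1)) p := Dexx.mul DB
  have DT2 : DifferentiableAt ℝ (fun q => (pd vx (pd vx u) q + 1)
      * (pd e (pd vy (pd vy u)) q + pd e (pd vt (pd vt u)) q + pd e (pd vt u) q)) p := DA.mul DC
  have DT3 : DifferentiableAt ℝ
      (fun q => 2 * pd vy (pd vx u) q * pd e (pd vy (pd vx u)) q) p :=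
    ((Dyx.const_mul 2).mul Deyx)
  have DT4 : DifferentiableAt ℝ
      (fun q => 2 * pd vt (pd vx u) q * pd e (pd vt (pd vx u)) q) p :=
    ((Dtx.const_mul 2).mul Detx)
  have key := pd_congr (f := fun q =>
      pd e (pd vx (pd vx u)) q * (pd vy (pd vy u) q + pd vt (pd vt u) q + pd vt u q + 1)
        + (pd vx (pd vx u) q + 1)
          * (pd e (pd vy (pd vy u)) q + pd e (pd vt (pd vt u)) q + pd e (pd vt u) q)
        - 2 * pd vy (pd vx u) q * pd e (pd vy (pd vx u)) q
        - 2 * pd vt (pd vx u) q * pd e (pd vt (pd vx u)) q)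
    (g := fun q => Real.exp (F q) * pd e F q) e (fun q => CY_d1 hF hu hcy e q) p
  rw [pd_mul (DF.exp) DFe, pd_exp DF] at key
  rw [pd_sub ((DT1.fun_add DT2).fun_sub DT3) DT4] at key
  rw [pd_sub (DT1.fun_add DT2) DT3] at key
  rw [pd_add DT1 DT2] at key
  rw [pd_mul Dexx DB, pd_mul DA DC] at key
  rw [pd_mul (Dyx.const_mul 2) Deyx, pd_mul (Dtx.const_mul 2) Detx] at key
  rw [pd_const_mul Dyx 2, pd_const_mul Dtx 2] at key
  rw [pd_add_const (f := fun q => pd vx (pd vx u) q) 1] at key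
  rw [pd_add_const
    (f := fun q => pd vy (pd vy u) q + pd vt (pd vt u) q + pd vt u q) 1] at key
  rw [pd_add (Dyy.fun_add Dtt) Dt, pd_add Dyy Dtt] at key
  rw [pd_add (Deyy.fun_add Dett) Deut, pd_add Deyy Dett] at key
  have hxx : pd e (fun q => pd vx (pd vx u) q) p = pd e (pd vx (pd vx u)) p := rfl
  rw [hxx] at key
  nlinarith [key, sq_nonneg (pd e (pd vy (pd vx u)) p), sq_nonneg (pd e (pd vt (pd vx u)) p)]

end CYaux

open CYaux

set_option maxHeartbeats 1000000 in
/-- Laplacian estimate: for every `K > 0` there is `C₁ > 0`,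
depending only on `K`, such that `|Δu|_{C⁰} ≤ C₁ (1 + |u|_{C¹})` for every `C⁴`
solution `u` of the reduced Calabi–Yau equation with `‖F‖_{C²} ≤ K` and
`∫ e^F = 1` (here `M` is any uniform bound on the first derivatives of `u`). -/
theorem stmt10 (K : ℝ) (hK : 0 < K) :
    ∃ C₁ : ℝ, 0 < C₁ ∧
      ∀ F u : R3 → ℝ,
        ContDiff ℝ 2 F → Periodic3 F → C2Bound F K →
        (∫ p in cube, Real.exp (F p)) = 1 →
        ContDiff ℝ 4 u → Periodic3 u → ZeroMean u → CYeq F u →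
        ∀ M : ℝ, (∀ e ∈ ({vx, vy, vt} : Set R3), ∀ p : R3, |pd e u p| ≤ M) →
        ∀ p : R3, |pd vx (pd vx u) p + pd vy (pd vy u) p + pd vt (pd vt u) p| ≤ C₁ * (1 + M) := by
  refine ⟨(4 + 4 * K) * Real.exp K + 4, by
    nlinarith only [mul_pos (show (0:ℝ) < 4 + 4*K by linarith) (Real.exp_pos K)], ?_⟩
  intro F u hF hFper hFb hFint hu huper huzm hcy M hM p
  have hM0 : 0 ≤ M := le_trans (abs_nonneg _) (hM vx (by simp) (0, 0, 0))
  have h1M : (0:ℝ) < 1 + M := by linarith only [hM0]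
  have hE1 : (1:ℝ) ≤ Real.exp K := by nlinarith only [Real.add_one_le_exp K, hK]
  set A₀ : ℝ := 1 / (1 + M) with hA₀def
  have hA₀pos : 0 < A₀ := by rw [hA₀def]; exact one_div_pos.mpr h1M
  have hA₀eq : A₀ * (1 + M) = 1 := by rw [hA₀def]; exact one_div_mul_cancel h1M.ne'
  have hudiff : Differentiable ℝ u := hu.differentiable (by norm_num)
  have hu2 : ContDiff ℝ 2 u := hu.of_le (by norm_num)
  -- positivity of `a = u_xx + 1` and `b = u_yy + u_tt + u_t + 1`
  have hAcont : Continuous (fun q => pd vx (pd vx u) q + 1) :=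
    ((ud2 hu vx vx).continuous).add continuous_const
  have hAnz : ∀ q, pd vx (pd vx u) q + 1 ≠ 0 := by
    intro q h
    have h1 := hcy q
    have h2 : (pd vx (pd vx u) q + 1)
        * (pd vy (pd vy u) q + pd vt (pd vt u) q + pd vt u q + 1) = 0 := by rw [h]; ring
    nlinarith only [h1, h2, Real.exp_pos (F q), sq_nonneg (pd vy (pd vx u) q),
      sq_nonneg (pd vt (pd vx u) q)]
  have hnegper : Periodic3 (fun q => -(u q)) := by
    intro q
    exact ⟨by simp [(huper q).1], by simp [(huper q).2.1], by simp [(huper q).2.2]⟩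
  obtain ⟨pm, hpm⟩ := exists_global_max (hu.continuous.neg) hnegper
  have hmin2 := (max_second_deriv (hu2.neg) hpm vx).2
  have hconv1 : ∀ q, pd vx (fun r => -(u r)) q = -(pd vx u q) := fun q => pd_neg u q vx
  have hconv2 : pd vx (pd vx (fun r => -(u r))) pm = -(pd vx (pd vx u) pm) := by
    rw [pd_congr vx hconv1 pm]; exact pd_neg (pd vx u) pm vx
  rw [hconv2] at hmin2
  have hApm : 0 < pd vx (pd vx u) pm + 1 := by linarith only [hmin2]
  have hApos : ∀ q, 0 < pd vx (pd vx u) q + 1 := pos_of_never_zero hAcont hAnz hApm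
  have hBpos : ∀ q, 0 < pd vy (pd vy u) q + pd vt (pd vt u) q + pd vt u q + 1 := by
    intro q
    nlinarith only [hcy q, hApos q, Real.exp_pos (F q), sq_nonneg (pd vy (pd vx u) q),
      sq_nonneg (pd vt (pd vx u) q)]
  -- the function `H = Δu + u_t - A₀ u` and its maximum point
  set Sf : R3 → ℝ := fun q =>
    pd vx (pd vx u) q + pd vy (pd vy u) q + pd vt (pd vt u) q + pd vt u q with hSdef
  have hS2 : ContDiff ℝ 2 Sf := by
    rw [hSdef]
    exact (((ud2 hu vx vx).add (ud2 hu vy vy)).add (ud2 hu vt vt)).add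
      ((ud3 hu vt).of_le (by norm_num))
  set H : R3 → ℝ := fun q => Sf q - A₀ * u q with hHdef
  have hH2 : ContDiff ℝ 2 H := by
    rw [hHdef]; exact hS2.sub (contDiff_const.mul hu2)
  have hHd : ∀ e, Differentiable ℝ (pd e H) :=
    fun e => (pd_contDiff (m := 1) hH2 (by norm_num) e).differentiable (by norm_num)
  have hp1 : ∀ e, Periodic3 (pd e u) := fun e => pd_periodic hudiff huper e
  have hp2 : ∀ e e', Periodic3 (pd e' (pd e u)) := fun e e' =>
    pd_periodic ((ud3 hu e).differentiable (by norm_num)) (hp1 e) e'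
  have hHper : Periodic3 H := by
    intro q
    refine ⟨?_, ?_, ?_⟩ <;> simp only [hHdef, hSdef]
    · rw [(hp2 vx vx q).1, (hp2 vy vy q).1, (hp2 vt vt q).1, (hp1 vt q).1, (huper q).1]
    · rw [(hp2 vx vx q).2.1, (hp2 vy vy q).2.1, (hp2 vt vt q).2.1, (hp1 vt q).2.1, (huper q).2.1]
    · rw [(hp2 vx vx q).2.2, (hp2 vy vy q).2.2, (hp2 vt vt q).2.2, (hp1 vt q).2.2, (huper q).2.2]
  obtain ⟨p₀, hmax⟩ := exists_global_max hH2.continuous hHper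
  have hgrad := max_second_deriv hH2 hmax
  -- decomposition of derivatives of `H`
  have hmul2 : ContDiff ℝ 2 (fun q => A₀ * u q) := contDiff_const.mul hu2
  have hHd1 : ∀ e q, pd e H q = pd e Sf q - A₀ * pd e u q := by
    intro e q
    rw [hHdef, pd_sub ((hS2.differentiable (by norm_num)) q) ((hmul2.differentiable (by norm_num)) q),
      pd_const_mul (hudiff q)]
  have hSd1 : ∀ e q, pd e Sf q = pd e (pd vx (pd vx u)) q + pd e (pd vy (pd vy u)) q
      + pd e (pd vt (pd vt u)) q + pd e (pd vt u) q := by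
    intro e q
    have D1 : DifferentiableAt ℝ (pd vx (pd vx u)) q :=
      ((ud2 hu vx vx).differentiable (by norm_num)) q
    have D2 : DifferentiableAt ℝ (pd vy (pd vy u)) q :=
      ((ud2 hu vy vy).differentiable (by norm_num)) q
    have D3 : DifferentiableAt ℝ (pd vt (pd vt u)) q :=
      ((ud2 hu vt vt).differentiable (by norm_num)) q
    have D4 : DifferentiableAt ℝ (pd vt u) q := ((ud3 hu vt).differentiable (by norm_num)) q
    rw [hSdef, pd_add ((D1.fun_add D2).fun_add D3) D4, pd_add (D1.fun_add D2) D3, pd_add D1 D2]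
  have hSd2 : ∀ e' e q, pd e' (pd e Sf) q = pd e' (pd e (pd vx (pd vx u))) q
      + pd e' (pd e (pd vy (pd vy u))) q + pd e' (pd e (pd vt (pd vt u))) q
      + pd e' (pd e (pd vt u)) q := by
    intro e' e q
    have D1 : DifferentiableAt ℝ (pd e (pd vx (pd vx u))) q :=
      ((ud1 hu vx vx e).differentiable (by norm_num)) q
    have D2 : DifferentiableAt ℝ (pd e (pd vy (pd vy u))) q :=
      ((ud1 hu vy vy e).differentiable (by norm_num)) q
    have D3 : DifferentiableAt ℝ (pd e (pd vt (pd vt u))) q :=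
      ((ud1 hu vt vt e).differentiable (by norm_num)) q
    have D4 : DifferentiableAt ℝ (pd e (pd vt u)) q :=
      ((ud2 hu vt e).differentiable (by norm_num)) q
    rw [pd_congr e' (hSd1 e) q, pd_add ((D1.fun_add D2).fun_add D3) D4, pd_add (D1.fun_add D2) D3,
      pd_add D1 D2]
  have hHd2 : ∀ e' e q, pd e' (pd e H) q = pd e' (pd e Sf) q - A₀ * pd e' (pd e u) q := by
    intro e' e q
    have D1 : DifferentiableAt ℝ (pd e Sf) q :=
      ((pd_contDiff (m := 1) hS2 (by norm_num) e).differentiable (by norm_num)) q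
    have D2 : DifferentiableAt ℝ (pd e u) q := ((ud3 hu e).differentiable (by norm_num)) q
    rw [pd_congr e' (hHd1 e) q, pd_sub D1 (D2.const_mul A₀), pd_const_mul D2]
  -- bilinear expansion of second directional derivatives of `H`
  have hbil : ∀ w1 w2 w3 : ℝ, pd (w1, w2, w3) (pd (w1, w2, w3) H) p₀ =
        w1 * (w1 * pd vx (pd vx H) p₀ + w2 * pd vx (pd vy H) p₀ + w3 * pd vx (pd vt H) p₀)
      + w2 * (w1 * pd vy (pd vx H) p₀ + w2 * pd vy (pd vy H) p₀ + w3 * pd vy (pd vt H) p₀)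
      + w3 * (w1 * pd vt (pd vx H) p₀ + w2 * pd vt (pd vy H) p₀ + w3 * pd vt (pd vt H) p₀) := by
    intro w1 w2 w3
    have hin : ∀ q, pd (w1, w2, w3) H q =
        w1 * pd vx H q + w2 * pd vy H q + w3 * pd vt H q := fun q => pd_dir' H q w1 w2 w3
    have hexp : ∀ i : R3, pd i (pd (w1, w2, w3) H) p₀ =
        w1 * pd i (pd vx H) p₀ + w2 * pd i (pd vy H) p₀ + w3 * pd i (pd vt H) p₀ := by
      intro i
      rw [pd_congr i hin p₀,
        pd_add (((hHd vx p₀).const_mul w1).fun_add ((hHd vy p₀).const_mul w2))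
          ((hHd vt p₀).const_mul w3),
        pd_add ((hHd vx p₀).const_mul w1) ((hHd vy p₀).const_mul w2),
        pd_const_mul (hHd vx p₀) w1, pd_const_mul (hHd vy p₀) w2, pd_const_mul (hHd vt p₀) w3]
    rw [pd_dir' (pd (w1, w2, w3) H) p₀ w1 w2 w3, hexp vx, hexp vy, hexp vt]
  -- raw facts at the maximum point
  have hcyp := hcy p₀
  have q1 := (hgrad ((pd vy (pd vy u) p₀ + pd vt (pd vt u) p₀ + pd vt u p₀ + 1), -(pd vy (pd vx u) p₀), -(pd vt (pd vx u) p₀))).2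
  rw [hbil ((pd vy (pd vy u) p₀ + pd vt (pd vt u) p₀ + pd vt u p₀ + 1)) (-(pd vy (pd vx u) p₀)) (-(pd vt (pd vx u) p₀))] at q1
  have q2 := (hgrad ((0:ℝ), pd vt (pd vx u) p₀, -(pd vy (pd vx u) p₀))).2
  rw [hbil 0 (pd vt (pd vx u) p₀) (-(pd vy (pd vx u) p₀))] at q2
  have q3 := (hgrad vy).2
  have q4 := (hgrad vt).2
  have hs12 : pd vx (pd vy H) p₀ = pd vy (pd vx H) p₀ := pd_comm hH2 vx vy p₀
  have hs13 : pd vx (pd vt H) p₀ = pd vt (pd vx H) p₀ := pd_comm hH2 vx vt p₀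
  have hH11c := hHd2 vx vx p₀
  rw [hSd2 vx vx p₀] at hH11c
  have hH22c := hHd2 vy vy p₀
  rw [hSd2 vy vy p₀] at hH22c
  have hH33c := hHd2 vt vt p₀
  rw [hSd2 vt vt p₀] at hH33c
  have hH12c := hHd2 vx vy p₀
  rw [hSd2 vx vy p₀] at hH12c
  have hH13c := hHd2 vx vt p₀
  rw [hSd2 vx vt p₀] at hH13c
  have hsw12 := sw_u hu vx vy p₀
  have hsw13 := sw_u hu vx vt p₀
  have hD2x := CY_d2 hF hu hcy vx p₀
  rw [commC4 hu p₀, commC8 hu p₀] at hD2x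
  have hD2y := CY_d2 hF hu hcy vy p₀
  rw [commC5 hu p₀, commC9 hu p₀] at hD2y
  have hD2t := CY_d2 hF hu hcy vt p₀
  rw [commC6 hu p₀, commC10 hu p₀] at hD2t
  have hD1t := CY_d1 hF hu hcy vt p₀
  have hC1v := commC1 hu p₀
  have hC2v := commC2 hu p₀
  have hC3v := commC3 hu p₀
  have hC7v := commC7 hu p₀
  have hC11v := commC11 hu p₀
  have hg1 := (hgrad vx).1
  rw [hHd1 vx p₀, hSd1 vx p₀] at hg1
  have hg2 := (hgrad vy).1
  rw [hHd1 vy p₀, hSd1 vy p₀] at hg2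
  have hg3 := (hgrad vt).1
  rw [hHd1 vt p₀, hSd1 vt p₀] at hg3
  have hb0 := hBpos p₀
  have hux := abs_le.mp (hM vx (by simp) p₀)
  have huy := abs_le.mp (hM vy (by simp) p₀)
  have hut := abs_le.mp (hM vt (by simp) p₀)
  have hFp := hFb p₀
  have hFK := abs_le.mp hFp.1
  have hFt1 := abs_le.mp (hFp.2.1 vt (by simp))
  have hFxx := abs_le.mp (hFp.2.2 vx (by simp) vx (by simp))
  have hFyy := abs_le.mp (hFp.2.2 vy (by simp) vy (by simp))
  have hFtt := abs_le.mp (hFp.2.2 vt (by simp) vt (by simp))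
  have hEpos := Real.exp_pos (F p₀)
  have hEle : Real.exp (F p₀) ≤ Real.exp K := Real.exp_le_exp.mpr hFK.2
  have hSfp0 : Sf p₀
      = pd vx (pd vx u) p₀ + pd vy (pd vy u) p₀ + pd vt (pd vt u) p₀ + pd vt u p₀ := by
    simp only [hSdef]
  -- abstract all derivative values at the maximum point
  set f4xxxx : ℝ := pd vx (pd vx (pd vx (pd vx u))) p₀ with hdef_f4xxxx
  set f4xxyy : ℝ := pd vx (pd vx (pd vy (pd vy u))) p₀ with hdef_f4xxyy
  set f4xxtt : ℝ := pd vx (pd vx (pd vt (pd vt u))) p₀ with hdef_f4xxtt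
  set f4yyxx : ℝ := pd vy (pd vy (pd vx (pd vx u))) p₀ with hdef_f4yyxx
  set f4yyyy : ℝ := pd vy (pd vy (pd vy (pd vy u))) p₀ with hdef_f4yyyy
  set f4yytt : ℝ := pd vy (pd vy (pd vt (pd vt u))) p₀ with hdef_f4yytt
  set f4ttxx : ℝ := pd vt (pd vt (pd vx (pd vx u))) p₀ with hdef_f4ttxx
  set f4ttyy : ℝ := pd vt (pd vt (pd vy (pd vy u))) p₀ with hdef_f4ttyy
  set f4tttt : ℝ := pd vt (pd vt (pd vt (pd vt u))) p₀ with hdef_f4tttt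
  set f4xyxx : ℝ := pd vx (pd vy (pd vx (pd vx u))) p₀ with hdef_f4xyxx
  set f4xyyy : ℝ := pd vx (pd vy (pd vy (pd vy u))) p₀ with hdef_f4xyyy
  set f4xytt : ℝ := pd vx (pd vy (pd vt (pd vt u))) p₀ with hdef_f4xytt
  set f4xtxx : ℝ := pd vx (pd vt (pd vx (pd vx u))) p₀ with hdef_f4xtxx
  set f4xtyy : ℝ := pd vx (pd vt (pd vy (pd vy u))) p₀ with hdef_f4xtyy
  set f4xttt : ℝ := pd vx (pd vt (pd vt (pd vt u))) p₀ with hdef_f4xttt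
  set t3xxx : ℝ := pd vx (pd vx (pd vx u)) p₀ with hdef_t3xxx
  set t3yxx : ℝ := pd vy (pd vx (pd vx u)) p₀ with hdef_t3yxx
  set t3txx : ℝ := pd vt (pd vx (pd vx u)) p₀ with hdef_t3txx
  set t3xyy : ℝ := pd vx (pd vy (pd vy u)) p₀ with hdef_t3xyy
  set t3yyy : ℝ := pd vy (pd vy (pd vy u)) p₀ with hdef_t3yyy
  set t3tyy : ℝ := pd vt (pd vy (pd vy u)) p₀ with hdef_t3tyy
  set t3xtt : ℝ := pd vx (pd vt (pd vt u)) p₀ with hdef_t3xtt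
  set t3ytt : ℝ := pd vy (pd vt (pd vt u)) p₀ with hdef_t3ytt
  set t3ttt : ℝ := pd vt (pd vt (pd vt u)) p₀ with hdef_t3ttt
  set t3xyx : ℝ := pd vx (pd vy (pd vx u)) p₀ with hdef_t3xyx
  set t3yyx : ℝ := pd vy (pd vy (pd vx u)) p₀ with hdef_t3yyx
  set t3tyx : ℝ := pd vt (pd vy (pd vx u)) p₀ with hdef_t3tyx
  set t3xtx : ℝ := pd vx (pd vt (pd vx u)) p₀ with hdef_t3xtx
  set t3ytx : ℝ := pd vy (pd vt (pd vx u)) p₀ with hdef_t3ytx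
  set t3ttx : ℝ := pd vt (pd vt (pd vx u)) p₀ with hdef_t3ttx
  set t3xxt : ℝ := pd vx (pd vx (pd vt u)) p₀ with hdef_t3xxt
  set t3yyt : ℝ := pd vy (pd vy (pd vt u)) p₀ with hdef_t3yyt
  set t3xyt : ℝ := pd vx (pd vy (pd vt u)) p₀ with hdef_t3xyt
  set b2xx : ℝ := pd vx (pd vx u) p₀ with hdef_b2xx
  set b2yy : ℝ := pd vy (pd vy u) p₀ with hdef_b2yy
  set b2tt : ℝ := pd vt (pd vt u) p₀ with hdef_b2tt
  set b2yx : ℝ := pd vy (pd vx u) p₀ with hdef_b2yx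
  set b2tx : ℝ := pd vt (pd vx u) p₀ with hdef_b2tx
  set b2xy : ℝ := pd vx (pd vy u) p₀ with hdef_b2xy
  set b2xt : ℝ := pd vx (pd vt u) p₀ with hdef_b2xt
  set b2yt : ℝ := pd vy (pd vt u) p₀ with hdef_b2yt
  set u1 : ℝ := pd vx u p₀ with hdef_u1
  set u2 : ℝ := pd vy u p₀ with hdef_u2
  set u3 : ℝ := pd vt u p₀ with hdef_u3
  set h2xx : ℝ := pd vx (pd vx H) p₀ with hdef_h2xx
  set h2xy : ℝ := pd vx (pd vy H) p₀ with hdef_h2xy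
  set h2xt : ℝ := pd vx (pd vt H) p₀ with hdef_h2xt
  set h2yx : ℝ := pd vy (pd vx H) p₀ with hdef_h2yx
  set h2yy : ℝ := pd vy (pd vy H) p₀ with hdef_h2yy
  set h2yt : ℝ := pd vy (pd vt H) p₀ with hdef_h2yt
  set h2tx : ℝ := pd vt (pd vx H) p₀ with hdef_h2tx
  set h2ty : ℝ := pd vt (pd vy H) p₀ with hdef_h2ty
  set h2tt : ℝ := pd vt (pd vt H) p₀ with hdef_h2tt
  set fE : ℝ := Real.exp (F p₀) with hdef_fE
  set gfx : ℝ := pd vx F p₀ with hdef_gfx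
  set gfy : ℝ := pd vy F p₀ with hdef_gfy
  set gft : ℝ := pd vt F p₀ with hdef_gft
  set gfxx : ℝ := pd vx (pd vx F) p₀ with hdef_gfxx
  set gfyy : ℝ := pd vy (pd vy F) p₀ with hdef_gfyy
  set gftt : ℝ := pd vt (pd vt F) p₀ with hdef_gftt
  -- the key algebraic consequences of the maximum principle
  have hident : (b2yy + b2tt + u3 + 1) * ((b2yy + b2tt + u3 + 1) * h2xx + (b2xx + 1) * h2yy + (b2xx + 1) * h2tt - 2 * b2yx * h2xy - 2 * b2tx * h2xt) =
      ((b2yy + b2tt + u3 + 1) * ((b2yy + b2tt + u3 + 1) * h2xx + (-b2yx) * h2xy + (-b2tx) * h2xt) + (-b2yx) * ((b2yy + b2tt + u3 + 1) * h2yx + (-b2yx) * h2yy + (-b2tx) * h2yt) + (-b2tx) * ((b2yy + b2tt + u3 + 1) * h2tx + (-b2yx) * h2ty + (-b2tx) * h2tt)) + ((0:ℝ) * ((0:ℝ) * h2xx + b2tx * h2xy + (-b2yx) * h2xt) + b2tx * ((0:ℝ) * h2yx + b2tx * h2yy + (-b2yx) * h2yt) + (-b2yx) * ((0:ℝ) *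 h2tx + b2tx * h2ty + (-b2yx) * h2tt))
      + (((b2xx + 1)) * (b2yy + b2tt + u3 + 1) - b2yx^2 - b2tx^2) * (h2yy + h2tt) := by
    linear_combination (-((b2yy + b2tt + u3 + 1) * b2yx)) * hs12 + (-((b2yy + b2tt + u3 + 1) * b2tx)) * hs13
  have hprod : (((b2xx + 1)) * (b2yy + b2tt + u3 + 1) - b2yx^2 - b2tx^2) * (h2yy + h2tt) ≤ 0 := by
    rw [hcyp]
    nlinarith only [mul_nonneg hEpos.le (show (0:ℝ) ≤ -(h2yy + h2tt) by linarith only [q3, q4])]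
  have I1 : (b2yy + b2tt + u3 + 1) * h2xx + (b2xx + 1) * h2yy + (b2xx + 1) * h2tt - 2 * b2yx * h2xy - 2 * b2tx * h2xt ≤ 0 := by nlinarith only [hident, q1, q2, hprod, hb0]
  have hsub : ((b2yy + b2tt + u3 + 1) * (f4xxxx + f4xxyy + f4xxtt + t3xxt) + (b2xx + 1) * (f4yyxx + f4yyyy + f4yytt + t3yyt) + (b2xx + 1) * (f4ttxx + f4ttyy + f4tttt + t3ttt) - 2 * b2yx * (f4xyxx + f4xyyy + f4xytt + t3xyt) - 2 * b2tx * (f4xtxx + f4xtyy + f4xttt + t3xtt)) - A₀ * ((b2yy + b2tt + u3 + 1) * b2xx + (b2xx + 1) * b2yy + (b2xx + 1) * b2tt - 2 * b2yx * b2yx - 2 * b2tx * b2tx) = (b2yy + b2tt + u3 + 1) * h2xx + (b2xx + 1) * h2yy + (b2xx + 1) * h2tt - 2 * b2yx * h2xy - 2 * b2tx * h2xt := by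
    linear_combination (-((b2yy + b2tt + u3 + 1))) * hH11c + (-((b2xx + 1))) * hH22c + (-((b2xx + 1))) * hH33c
      + (2*b2yx) * hH12c + (2*b2tx) * hH13c
      + (-(2*b2yx*A₀)) * hsw12 + (-(2*b2tx*A₀)) * hsw13
  have I2 : ((b2yy + b2tt + u3 + 1) * (f4xxxx + f4xxyy + f4xxtt + t3xxt) + (b2xx + 1) * (f4yyxx + f4yyyy + f4yytt + t3yyt) + (b2xx + 1) * (f4ttxx + f4ttyy + f4tttt + t3ttt) - 2 * b2yx * (f4xyxx + f4xyyy + f4xytt + t3xyt) - 2 * b2tx * (f4xtxx + f4xtyy + f4xttt + t3xtt)) ≤ A₀ * ((b2yy + b2tt + u3 + 1) * b2xx + (b2xx + 1) * b2yy + (b2xx + 1) * b2tt - 2 * b2yx * b2yx - 2 * b2tx * b2tx) := by linarith only [I1, hsub]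
  have LSid : ((b2yy + b2tt + u3 + 1) * (f4xxxx + f4xxyy + f4xxtt + t3xxt) + (b2xx + 1) * (f4yyxx + f4yyyy + f4yytt + t3yyt) + (b2xx + 1) * (f4ttxx + f4ttyy + f4tttt + t3ttt) - 2 * b2yx * (f4xyxx + f4xyyy + f4xytt + t3xyt) - 2 * b2tx * (f4xtxx + f4xtyy + f4xttt + t3xtt)) = fE * (gfx^2 + gfxx + gfy^2 + gfyy + gft^2 + gftt + gft) + 2 * (t3xyx^2 + t3yyx^2 + t3tyx^2 + t3xtx^2 + t3ytx^2 + t3ttx^2) - 2 * (t3xxx * (t3xyy + t3xtt + b2xt) + t3yxx * (t3yyy + t3ytt + b2yt) + t3txx * (t3tyy + t3ttt + b2tt)) - (b2xx + 1) * (t3txx + (t3tyy + t3ttt + b2tt)) := by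
    linear_combination hD2x + hD2y + hD2t + hD1t
      + (((b2xx + 1)) - (b2yy + b2tt + u3 + 1)) * hC1v + (((b2xx + 1)) - (b2yy + b2tt + u3 + 1)) * hC2v + (((b2xx + 1)) - (b2yy + b2tt + u3 + 1)) * hC3v
      + (2*b2yx) * hC7v + (2*b2tx) * hC11v
  have hux2 : u1^2 ≤ M^2 := by nlinarith only [hux.1, hux.2]
  have huy2 : u2^2 ≤ M^2 := by nlinarith only [huy.1, huy.2]
  have hut2 : u3^2 ≤ M^2 := by nlinarith only [hut.1, hut.2]
  have hTx : -(2 * (t3xxx * (t3xyy + t3xtt + b2xt))) ≥ -((1/2) * (A₀^2 * M^2)) := by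
    have hBeq : (t3xyy + t3xtt + b2xt) = A₀ * u1 - t3xxx := by linarith only [hg1]
    have hpe : t3xxx * (t3xyy + t3xtt + b2xt) = t3xxx * (A₀ * u1 - t3xxx) := by rw [hBeq]
    rw [hpe]
    nlinarith only [sq_nonneg (2*t3xxx - A₀ * u1), mul_nonneg (sq_nonneg A₀) (sub_nonneg.mpr hux2)]
  have hTy : -(2 * (t3yxx * (t3yyy + t3ytt + b2yt))) ≥ -((1/2) * (A₀^2 * M^2)) := by
    have hBeq : (t3yyy + t3ytt + b2yt) = A₀ * u2 - t3yxx := by linarith only [hg2]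
    have hpe : t3yxx * (t3yyy + t3ytt + b2yt) = t3yxx * (A₀ * u2 - t3yxx) := by rw [hBeq]
    rw [hpe]
    nlinarith only [sq_nonneg (2*t3yxx - A₀ * u2), mul_nonneg (sq_nonneg A₀) (sub_nonneg.mpr huy2)]
  have hTt : -(2 * (t3txx * (t3tyy + t3ttt + b2tt))) ≥ -((1/2) * (A₀^2 * M^2)) := by
    have hBeq : (t3tyy + t3ttt + b2tt) = A₀ * u3 - t3txx := by linarith only [hg3]
    have hpe : t3txx * (t3tyy + t3ttt + b2tt) = t3txx * (A₀ * u3 - t3txx) := by rw [hBeq]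
    rw [hpe]
    nlinarith only [sq_nonneg (2*t3txx - A₀ * u3), mul_nonneg (sq_nonneg A₀) (sub_nonneg.mpr hut2)]
  have hsumF : -(4*K) ≤ (gfx^2 + gfxx + gfy^2 + gfyy + gft^2 + gftt + gft) := by
    nlinarith only [hFxx.1, hFyy.1, hFtt.1, hFt1.1, sq_nonneg gfx, sq_nonneg gfy, sq_nonneg gft]
  have hEF : -(4*K*Real.exp K) ≤ fE * (gfx^2 + gfxx + gfy^2 + gfyy + gft^2 + gftt + gft) := by
    have h1 : fE * (-(4*K)) ≤ fE * (gfx^2 + gfxx + gfy^2 + gfyy + gft^2 + gftt + gft) := mul_le_mul_of_nonneg_left hsumF hEpos.le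
    have h2 := mul_le_mul_of_nonneg_left hEle (show (0:ℝ) ≤ 4*K by linarith only [hK])
    nlinarith only [h1, h2]
  have hg3' : t3txx + (t3tyy + t3ttt + b2tt) = A₀ * u3 := by linarith only [hg3]
  have hpr : ((b2xx + 1)) * (t3txx + (t3tyy + t3ttt + b2tt)) = ((b2xx + 1)) * (A₀ * u3) := by rw [hg3']
  have hAE : A₀ * fE ≤ A₀ * Real.exp K := mul_le_mul_of_nonneg_left hEle hA₀pos.le
  have hRHSeq : ((b2yy + b2tt + u3 + 1) * b2xx + (b2xx + 1) * b2yy + (b2xx + 1) * b2tt - 2 * b2yx * b2yx - 2 * b2tx * b2tx) = 2 * fE - (((b2xx + 1)) + (b2yy + b2tt + u3 + 1)) - ((b2xx + 1)) * u3 := by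
    linear_combination 2 * hcyp
  have KEY : A₀ * (((b2xx + 1)) + (b2yy + b2tt + u3 + 1))
      ≤ 2 * (A₀ * Real.exp K) + 4*K*Real.exp K + (3/2) * (A₀^2 * M^2) := by
    rw [hRHSeq] at I2
    linarith only [I2, LSid, hEF, hTx, hTy, hTt, hpr, hAE, sq_nonneg t3xyx, sq_nonneg t3yyx,
      sq_nonneg t3tyx, sq_nonneg t3xtx, sq_nonneg t3ytx, sq_nonneg t3ttx]
  -- transfer the bound from the maximum point to all points
  have hcanc : ∀ X : ℝ, (1 + M) * (A₀ * X) = X := by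
    intro X; rw [← mul_assoc, mul_comm (1+M) A₀, hA₀eq, one_mul]
  have hmulKEY := mul_le_mul_of_nonneg_left KEY (show (0:ℝ) ≤ 1 + M by linarith only [hM0])
  rw [hcanc] at hmulKEY
  have hexpand : (1+M) * (2*(A₀*Real.exp K) + 4*K*Real.exp K + (3/2)*(A₀^2*M^2))
      = 2*Real.exp K + 4*K*Real.exp K*(1+M) + (3/2)*(A₀*M^2) := by
    linear_combination (2*Real.exp K + (3/2)*(A₀*M^2)) * hA₀eq
  rw [hexpand] at hmulKEY
  have hA₀M2 : A₀ * M^2 ≤ M := by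
    have h5 : A₀*M^2 + A₀*M = M := by linear_combination M * hA₀eq
    linarith only [h5, mul_nonneg hA₀pos.le hM0]
  have hmp : Sf p - A₀ * u p ≤ Sf p₀ - A₀ * u p₀ := by
    have := hmax p; simp only [hHdef] at this; exact this
  obtain ⟨qq, hqc, hqrep⟩ := exists_cube_rep p
  obtain ⟨q0, hq0c, hq0rep⟩ := exists_cube_rep p₀
  have hosc : |u qq - u q0| ≤ 3 * M := osc_bound hudiff hM hqc hq0c
  have hd1 : u p - u p₀ ≤ 3 * M := by
    rw [← hqrep u huper, ← hq0rep u huper]; linarith only [(abs_le.mp hosc).2]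
  have hd2 : A₀ * (u p - u p₀) ≤ A₀ * (3*M) := mul_le_mul_of_nonneg_left hd1 hA₀pos.le
  have hd3 : A₀ * (3*M) ≤ 3 := by nlinarith only [hA₀eq, hA₀pos]
  have hSp : Sf p ≤ Sf p₀ + 3 := by nlinarith only [hmp, hd2, hd3]
  have hSfp : Sf p = pd vx (pd vx u) p + pd vy (pd vy u) p + pd vt (pd vt u) p + pd vt u p := by
    simp only [hSdef]
  have hutp := abs_le.mp (hM vt (by simp) p)
  have hC8 : (8:ℝ) ≤ (4 + 4*K)*Real.exp K + 4 := by
    nlinarith only [hE1, hK, Real.exp_pos K, mul_pos hK (Real.exp_pos K)]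
  have hCM : 8*M ≤ ((4 + 4*K)*Real.exp K + 4)*M := mul_le_mul_of_nonneg_right hC8 hM0
  have hEM : M ≤ Real.exp K * M := by nlinarith only [hE1, hM0]
  rw [abs_le]
  constructor
  · nlinarith only [hBpos p, hApos p, hutp.1, hutp.2, hC8, hCM, hM0]
  · linarith only [hmulKEY, hSp, hSfp, hSfp0, hutp.1, hEM, hM0, hE1, hCM, hA₀M2]

end
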